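/- arXiv:1311.0722 — 3 statements merged into one kernel-verified Lean document; each statement's English description precedes it below -/
import Mathlib

section
/- Let X, Y be Banach spaces and f = Σ_{p≥0} f^(p) a formal series with multiradius of convergence ρ_⊗(f) > 0. For r with 0 < r < ρ_⊗(f), for all φ, ψ ∈ X and h ∈ ℝ with ‖φ‖_X ≤ r and ‖φ + hψ‖_X ≤ r, the first-order Taylor remainder satisfies ‖f(φ + hψ) − f(φ) − h·δf_φ(ψ)‖_Y ≤ (1/2)·[[f]]''(r)·h²·‖ψ‖²_X, where δf_φ(ψ) := Σ_p p·f^(p)_⊗(ψ ⊗ φ^{⊗(p−1)}) and [[f]]''(r) = Σ_p p(p−1)‖f^(p)‖_⊗ r^{p−2}. -/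
open scoped ENNReal

open Finset Function Set

lemma seg_bound {X : Type*} [NormedAddCommGroup X] [NormedSpace ℝ X] {a b : X} {r t : ℝ}
    (ha : ‖a‖ ≤ r) (hab : ‖a + b‖ ≤ r) (ht0 : 0 ≤ t) (ht1 : t ≤ 1) : ‖a + t • b‖ ≤ r := by
  have he : a + t • b = (1 - t) • a + t • (a + b) := by module
  rw [he]
  calc ‖(1-t) • a + t • (a+b)‖ ≤ ‖(1-t) • a‖ + ‖t • (a+b)‖ := norm_add_le _ _
    _ = (1-t) * ‖a‖ + t * ‖a+b‖ := by
        rw [norm_smul, norm_smul, Real.norm_of_nonneg (by linarith), Real.norm_of_nonneg ht0]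
    _ ≤ (1-t) * r + t * r :=
        add_le_add (mul_le_mul_of_nonneg_left ha (by linarith)) (mul_le_mul_of_nonneg_left hab ht0)
    _ = r := by ring

lemma pmul_nonneg (p : ℕ) : 0 ≤ (p:ℝ) * ((p:ℝ) - 1) := by
  rcases p with _ | q
  · norm_num
  · have h1 : (1:ℝ) ≤ ((q+1 : ℕ) : ℝ) := by exact_mod_cast Nat.one_le_iff_ne_zero.mpr q.succ_ne_zero
    nlinarith [h1]

lemma taylor_key {X Y : Type*} [NormedAddCommGroup X] [NormedSpace ℝ X]
    [NormedAddCommGroup Y] [NormedSpace ℝ Y]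
    (p : ℕ) (m : ContinuousMultilinearMap ℝ (fun _ : Fin p => X) Y) {r : ℝ} (hr : 0 ≤ r)
    (a b : X) (ha : ‖a‖ ≤ r) (hab : ‖a + b‖ ≤ r) :
    ‖(m fun _ => a + b) - (m fun _ => a) - ∑ i : Fin p, m (Function.update (fun _ => a) i b)‖
      ≤ 1/2 * ((p:ℝ) * ((p:ℝ) - 1) * ‖m‖ * r ^ (p - 2) * ‖b‖ ^ 2) := by
  classical
  set C : ℝ := (p:ℝ) * ((p:ℝ) - 1) * ‖m‖ * r ^ (p - 2) * ‖b‖ ^ 2 with hCdef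
  have hC : 0 ≤ C := by
    have := pmul_nonneg p
    positivity
  set g : ℝ → Y := fun t => m (fun _ => a + t • b) with hgdef
  set g' : ℝ → Y := fun t => ∑ i : Fin p, m (Function.update (fun _ : Fin p => a + t • b) i b)
    with hg'def
  have hg : ∀ t : ℝ, HasDerivAt g (g' t) t := by
    intro t
    have h1 : HasFDerivAt m (m.linearDeriv (fun _ => a + t • b)) (fun _ : Fin p => a + t • b) :=
      m.hasFDerivAt _
    have h2 : HasDerivAt (fun s : ℝ => (fun _ : Fin p => a + s • b)) (fun _ => b) t := by
      rw [hasDerivAt_pi]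
      intro i
      simpa using ((hasDerivAt_id t).smul_const b).const_add a
    have h3 := h1.comp_hasDerivAt t h2
    simpa [g, g', ContinuousMultilinearMap.linearDeriv_apply, Function.comp_def] using h3
  have hg'0 : g' 0 = ∑ i : Fin p, m (Function.update (fun _ : Fin p => a) i b) := by
    simp [g']
  have hlip : ∀ t ∈ Icc (0:ℝ) 1, ‖g' t - g' 0‖ ≤ C * t := by
    rintro t ⟨ht0, ht1⟩
    have hterm : ∀ i : Fin p,
        ‖m (Function.update (fun _ : Fin p => a + t • b) i b)
          - m (Function.update (fun _ : Fin p => a + (0:ℝ) • b) i b)‖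
        ≤ ‖m‖ * (((p:ℝ) - 1) * (‖b‖ ^ 2 * r ^ (p - 2) * t)) := by
      intro i
      set m₁ : Fin p → X := Function.update (fun _ : Fin p => a + t • b) i b with hm₁
      set m₂ : Fin p → X := Function.update (fun _ : Fin p => a + (0:ℝ) • b) i b with hm₂
      refine le_trans (m.norm_image_sub_le' m₁ m₂) (mul_le_mul_of_nonneg_left ?_ (norm_nonneg m))
      have hprod : ∀ k : Fin p, (∏ j : Fin p,
          if j = k then ‖m₁ k - m₂ k‖ else ‖m₁ j‖ ⊔ ‖m₂ j‖)
          ≤ if k = i then 0 else ‖b‖ ^ 2 * r ^ (p - 2) * t := by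
        intro k
        by_cases hk : k = i
        · rw [if_pos hk]
          have hz : (∏ j : Fin p, if j = k then ‖m₁ k - m₂ k‖ else ‖m₁ j‖ ⊔ ‖m₂ j‖) = 0 := by
            apply Finset.prod_eq_zero (Finset.mem_univ k)
            rw [if_pos rfl]
            subst hk
            simp [hm₁, hm₂]
          rw [hz]
        · rw [if_neg hk]
          have hik : i ≠ k := Ne.symm hk
          set F : Fin p → ℝ := fun j => if j = k then t * ‖b‖ else if j = i then ‖b‖ else r
            with hF
          have hFk : F k = t * ‖b‖ := by simp [hF]
          have hFi : F i = ‖b‖ := by simp [hF, hik]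
          calc (∏ j : Fin p, if j = k then ‖m₁ k - m₂ k‖ else ‖m₁ j‖ ⊔ ‖m₂ j‖)
              ≤ ∏ j : Fin p, F j := by
                apply Finset.prod_le_prod
                · intro j _
                  split_ifs
                  · exact norm_nonneg _
                  · exact le_trans (norm_nonneg _) (le_max_left _ _)
                · intro j _
                  by_cases hj : j = k
                  · rw [if_pos hj, hj, hFk]
                    have h1 : m₁ k = a + t • b := Function.update_of_ne hk _ _
                    have h2 : m₂ k = a + (0:ℝ) • b := Function.update_of_ne hk _ _
                    rw [h1, h2]
                    simp [norm_smul, abs_of_nonneg ht0]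
                  · rw [if_neg hj]
                    by_cases hji : j = i
                    · rw [hji, hFi]
                      simp [hm₁, hm₂]
                    · have hFj : F j = r := by simp [hF, hj, hji]
                      rw [hFj]
                      have h1 : m₁ j = a + t • b := Function.update_of_ne hji _ _
                      have h2 : m₂ j = a + (0:ℝ) • b := Function.update_of_ne hji _ _
                      rw [h1, h2]
                      refine max_le (seg_bound ha hab ht0 ht1) ?_
                      simpa using ha
            _ = F k * (F i * ∏ j ∈ (Finset.univ.erase k).erase i, F j) := by
                rw [Finset.mul_prod_erase _ F (Finset.mem_erase.2 ⟨hik, Finset.mem_univ i⟩),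
                  Finset.mul_prod_erase _ F (Finset.mem_univ k)]
            _ = ‖b‖ ^ 2 * r ^ (p - 2) * t := by
                have hconst : ∀ j ∈ (Finset.univ.erase k).erase i, F j = r := by
                  intro j hj
                  obtain ⟨hji, hjk'⟩ := Finset.mem_erase.1 hj
                  obtain ⟨hjk, _⟩ := Finset.mem_erase.1 hjk'
                  simp [hF, hjk, hji]
                rw [Finset.prod_congr rfl hconst, Finset.prod_const, hFk, hFi,
                  Finset.card_erase_of_mem (Finset.mem_erase.2 ⟨hik, Finset.mem_univ i⟩),
                  Finset.card_erase_of_mem (Finset.mem_univ k), Finset.card_univ,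
                  Fintype.card_fin, Nat.sub_sub]
                ring
      calc (∑ k : Fin p, ∏ j : Fin p, if j = k then ‖m₁ k - m₂ k‖ else ‖m₁ j‖ ⊔ ‖m₂ j‖)
          ≤ ∑ k : Fin p, (if k = i then 0 else ‖b‖ ^ 2 * r ^ (p - 2) * t) :=
            Finset.sum_le_sum (fun k _ => hprod k)
        _ = ((p:ℝ) - 1) * (‖b‖ ^ 2 * r ^ (p - 2) * t) := by
            rw [← Finset.sum_erase_add _ _ (Finset.mem_univ i), if_pos rfl, add_zero]
            have hc : ∀ k ∈ Finset.univ.erase i,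
                (if k = i then (0:ℝ) else ‖b‖ ^ 2 * r ^ (p - 2) * t)
                  = ‖b‖ ^ 2 * r ^ (p - 2) * t :=
              fun k hki => if_neg (Finset.mem_erase.1 hki).1
            rw [Finset.sum_congr rfl hc, Finset.sum_const,
              Finset.card_erase_of_mem (Finset.mem_univ i), Finset.card_univ, Fintype.card_fin,
              nsmul_eq_mul]
            congr 1
            rw [Nat.cast_sub (Fin.pos i), Nat.cast_one]
    calc ‖g' t - g' 0‖ = ‖∑ i : Fin p, (m (Function.update (fun _ : Fin p => a + t • b) i b)
          - m (Function.update (fun _ : Fin p => a + (0:ℝ) • b) i b))‖ := by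
          rw [hg'def, Finset.sum_sub_distrib]
      _ ≤ ∑ i : Fin p, ‖m (Function.update (fun _ : Fin p => a + t • b) i b)
          - m (Function.update (fun _ : Fin p => a + (0:ℝ) • b) i b)‖ := norm_sum_le _ _
      _ ≤ ∑ _i : Fin p, ‖m‖ * (((p:ℝ) - 1) * (‖b‖ ^ 2 * r ^ (p - 2) * t)) :=
          Finset.sum_le_sum (fun i _ => hterm i)
      _ = C * t := by
          rw [Finset.sum_const, Finset.card_univ, Fintype.card_fin, nsmul_eq_mul, hCdef]
          ring
  -- mean value with quadratic boundary
  set D : Y := g' 0 with hD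
  set G : ℝ → Y := fun t => g t - g 0 - t • D with hGdef2
  have hGd : ∀ t : ℝ, HasDerivAt G (g' t - D) t := by
    intro t
    have h1 : HasDerivAt (fun s : ℝ => s • D) D t := by
      simpa using (hasDerivAt_id t).smul_const D
    exact ((hg t).sub_const (g 0)).sub h1
  have hB : ∀ x : ℝ, HasDerivAt (fun s => C/2 * s^2) (C * x) x := by
    intro x
    have h2 : HasDerivAt (fun s : ℝ => C/2 * s^2) (C/2 * (((2:ℕ):ℝ) * x^(2-1))) x :=
      (hasDerivAt_pow 2 x).const_mul (C/2)
    convert h2 using 1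
    simp
    ring
  have hbound := image_norm_le_of_norm_deriv_right_le_deriv_boundary
    (f := G) (f' := fun t => g' t - D) (a := 0) (b := 1)
    (fun t _ => (hGd t).continuousAt.continuousWithinAt)
    (fun x _ => (hGd x).hasDerivWithinAt)
    (B := fun s => C/2 * s^2) (B' := fun x => C * x)
    (by simp [G])
    hB
    (fun x hx => hlip x ⟨hx.1, hx.2.le⟩)
    (right_mem_Icc.2 zero_le_one)
  have hG1 : G 1 = (m fun _ => a + b) - (m fun _ => a)
      - ∑ i : Fin p, m (Function.update (fun _ => a) i b) := by
    simp only [hGdef2, hgdef, one_smul, hD, hg'0]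
    norm_num
    rw [← hD]
    exact hg'0
  calc ‖(m fun _ => a + b) - (m fun _ => a)
        - ∑ i : Fin p, m (Function.update (fun _ => a) i b)‖ = ‖G 1‖ := by rw [hG1]
    _ ≤ C/2 * 1^2 := hbound
    _ = 1/2 * C := by ring

lemma sq_summable {X Y : Type*} [NormedAddCommGroup X] [NormedSpace ℝ X]
    [NormedAddCommGroup Y] [NormedSpace ℝ Y]
    (f : FormalMultilinearSeries ℝ X Y) {r : ℝ} (hr : 0 < r)
    (hrρ : ENNReal.ofReal r < f.radius) :
    Summable (fun p : ℕ => (p:ℝ)^2 * ‖f p‖ * r ^ (p - 2)) := by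
  have hlt : (r.toNNReal : ℝ≥0∞) < f.radius := hrρ
  obtain ⟨a, ha, C, hC, H⟩ := f.norm_mul_pow_le_mul_pow_of_lt_radius hlt
  have hcoe : (r.toNNReal : ℝ) = r := Real.coe_toNNReal r hr.le
  set K : ℝ := C/r^2 + C/r + C with hK
  have hsum : Summable (fun p : ℕ => K * ((p:ℝ)^2 * a^p)) := by
    apply Summable.mul_left
    apply summable_pow_mul_geometric_of_norm_lt_one
    rw [Real.norm_eq_abs, abs_of_pos ha.1]
    exact ha.2
  apply Summable.of_nonneg_of_le (fun p => by positivity) _ hsum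
  intro p
  have Hp := H p
  rw [hcoe] at Hp
  match p with
  | 0 => norm_num
  | 1 =>
    have key : ‖f 1‖ ≤ C * a / r := by
      rw [le_div_iff₀ hr]
      simpa using Hp
    have h2 : (0:ℝ) ≤ C/r^2 := by positivity
    calc ((1:ℕ):ℝ)^2 * ‖f 1‖ * r^(1-2) = ‖f 1‖ := by norm_num
      _ ≤ C * a / r := key
      _ = (C/r) * a := by ring
      _ ≤ K * a := mul_le_mul_of_nonneg_right (by rw [hK]; linarith [hC.le]) ha.1.le
      _ = K * (((1:ℕ):ℝ)^2 * a^1) := by norm_num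
  | (q+2) =>
    have h1 : ‖f (q+2)‖ * r^q ≤ C * a^(q+2) / r^2 := by
      rw [le_div_iff₀ (by positivity : (0:ℝ) < r^2)]
      calc ‖f (q+2)‖ * r^q * r^2 = ‖f (q+2)‖ * r^(q+2) := by ring
        _ ≤ C * a^(q+2) := by
            have := H (q+2); rw [hcoe] at this; exact this
    calc ((q+2:ℕ):ℝ)^2 * ‖f (q+2)‖ * r^(q+2-2)
        = ((q+2:ℕ):ℝ)^2 * (‖f (q+2)‖ * r^q) := by rw [Nat.add_sub_cancel]; ring
      _ ≤ ((q+2:ℕ):ℝ)^2 * ((C/r^2) * a^(q+2)) := by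
          apply mul_le_mul_of_nonneg_left _ (by positivity)
          calc ‖f (q+2)‖ * r^q ≤ C*a^(q+2)/r^2 := h1
            _ = (C/r^2)*a^(q+2) := by ring
      _ ≤ K * (((q+2:ℕ):ℝ)^2 * a^(q+2)) := by
          rw [hK]
          have h0 : (0:ℝ) ≤ ((q+2:ℕ):ℝ)^2 * a^(q+2) :=
            mul_nonneg (by positivity) (pow_nonneg ha.1.le _)
          nlinarith [mul_nonneg (add_nonneg (div_nonneg hC.le hr.le) hC.le) h0]

/-- Second order Taylor estimate for the sum of a formal series with positive
radius of convergence: for `0 < r < ρ_⊗(f)`, `‖φ‖ ≤ r`, `‖φ + h•ψ‖ ≤ r`,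
`‖f(φ+hψ) − f(φ) − h·δf_φ(ψ)‖ ≤ (1/2)·[[f]]''(r)·h²·‖ψ‖²`, where
`δf_φ(ψ) = Σ_p p·f^(p)(ψ, φ, …, φ)` and `[[f]]''(r) = Σ_p p(p−1)‖f^(p)‖ r^{p−2}`. -/
theorem formal_series_taylor_second_order
    {X Y : Type*} [NormedAddCommGroup X] [NormedSpace ℝ X] [CompleteSpace X]
    [NormedAddCommGroup Y] [NormedSpace ℝ Y] [CompleteSpace Y]
    (f : FormalMultilinearSeries ℝ X Y)
    (hsym : ∀ (p : ℕ) (σ : Equiv.Perm (Fin p)) (φ : Fin p → X),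
      f p (fun i => φ (σ i)) = f p φ)
    (hρ : 0 < f.radius)
    (r : ℝ) (hr : 0 < r) (hrρ : (ENNReal.ofReal r) < f.radius)
    (φ ψ : X) (h : ℝ) (hφ : ‖φ‖ ≤ r) (hφψ : ‖φ + h • ψ‖ ≤ r) :
    ‖f.sum (φ + h • ψ) - f.sum φ -
        h • ∑' p : ℕ, (p : ℝ) • f p (fun i => if (i : ℕ) = 0 then ψ else φ)‖ ≤
      (1 / 2) * (∑' p : ℕ, (p : ℝ) * ((p : ℝ) - 1) * ‖f p‖ * r ^ (p - 2)) * h ^ 2 * ‖ψ‖ ^ 2 := by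
  classical
  by_cases hzero : h = 0
  · subst hzero
    simp
  set b : X := h • ψ with hb
  set S : ℕ → Y := fun p => ∑ i : Fin p, f p (Function.update (fun _ : Fin p => φ) i b)
    with hSdef
  set R : ℕ → Y := fun p => (f p fun _ => φ + b) - (f p fun _ => φ) - S p with hRdef
  set c : ℕ → ℝ := fun p => 1/2 * ((p:ℝ) * ((p:ℝ) - 1) * ‖f p‖ * r ^ (p - 2) * ‖b‖ ^ 2)
    with hcdef
  have hRc : ∀ p, ‖R p‖ ≤ c p := fun p => taylor_key p (f p) hr.le φ b hφ hφψ
  have hDsum : Summable (fun p : ℕ => (p:ℝ) * ((p:ℝ) - 1) * ‖f p‖ * r ^ (p - 2)) := by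
    apply Summable.of_nonneg_of_le _ _ (sq_summable f hr hrρ)
    · intro p
      exact mul_nonneg (mul_nonneg (pmul_nonneg p) (norm_nonneg _)) (pow_nonneg hr.le _)
    · intro p
      apply mul_le_mul_of_nonneg_right _ (pow_nonneg hr.le _)
      apply mul_le_mul_of_nonneg_right _ (norm_nonneg _)
      nlinarith [Nat.cast_nonneg (α := ℝ) p]
  have hcsum : Summable c := by
    have hce : c = fun p : ℕ => (1/2 * ‖b‖^2) * ((p:ℝ) * ((p:ℝ) - 1) * ‖f p‖ * r ^ (p - 2)) :=
      funext fun p => by simp only [hcdef]; ring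
    rw [hce]
    exact hDsum.mul_left _
  have hnormR : Summable (fun p => ‖R p‖) :=
    Summable.of_nonneg_of_le (fun p => norm_nonneg _) hRc hcsum
  have hRsum : Summable R := hnormR.of_norm
  have hmem1 : (φ + b) ∈ EMetric.ball (0:X) f.radius := by
    show _ ∈ Metric.eball (0:X) f.radius
    rw [mem_emetric_ball_zero_iff]
    calc (‖φ + b‖₊ : ℝ≥0∞) = ENNReal.ofReal ‖φ + b‖ := (ofReal_norm _).symm
      _ ≤ ENNReal.ofReal r := ENNReal.ofReal_le_ofReal hφψ
      _ < f.radius := hrρ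
  have hmem2 : φ ∈ EMetric.ball (0:X) f.radius := by
    show _ ∈ Metric.eball (0:X) f.radius
    rw [mem_emetric_ball_zero_iff]
    calc (‖φ‖₊ : ℝ≥0∞) = ENNReal.ofReal ‖φ‖ := (ofReal_norm _).symm
      _ ≤ ENNReal.ofReal r := ENNReal.ofReal_le_ofReal hφ
      _ < f.radius := hrρ
  have hT1 := f.hasSum hmem1
  have hT2 := f.hasSum hmem2
  have hSg : ∀ p : ℕ, S p = h • ((p:ℝ) • f p (fun i => if (i:ℕ) = 0 then ψ else φ)) := by
    intro p
    rcases p with _ | q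
    · simp [hSdef]
    · set w : Fin (q+1) → X := fun i => if (i:ℕ) = 0 then ψ else φ with hw
      have hterm : ∀ i : Fin (q+1),
          f (q+1) (Function.update (fun _ : Fin (q+1) => φ) i b) = h • f (q+1) w := by
        intro i
        rw [hb, ContinuousMultilinearMap.map_update_smul]
        congr 1
        set v : Fin (q+1) → X := Function.update (fun _ : Fin (q+1) => φ) i ψ with hv
        have hfun : (fun j => v ((Equiv.swap 0 i) j)) = w := by
          funext j
          by_cases hj : j = 0
          · subst hj
            rw [Equiv.swap_apply_left, hv, Function.update_self]
            simp [hw]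
          · have hj' : (j:ℕ) ≠ 0 := fun hc => hj (Fin.ext (by simpa using hc))
            by_cases hji : j = i
            · subst hji
              rw [Equiv.swap_apply_right, hv, Function.update_of_ne (Ne.symm hj)]
              simp [hw, hj', hj]
            · rw [Equiv.swap_apply_of_ne_of_ne hj hji, hv, Function.update_of_ne hji]
              simp [hw, hj', hj]
        have hs := hsym (q+1) (Equiv.swap 0 i) v
        rw [← hs]
        exact congrArg _ hfun
      rw [hSdef]
      simp only
      rw [Finset.sum_congr rfl (fun i _ => hterm i), Finset.sum_const, Finset.card_univ,
        Fintype.card_fin]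
      rw [← Nat.cast_smul_eq_nsmul ℝ (q+1) (h • f (q+1) w)]
      rw [smul_comm]
  have hgsummable : Summable
      (fun p : ℕ => (p:ℝ) • f p (fun i => if (i:ℕ) = 0 then ψ else φ)) := by
    have hS' : Summable S := by
      have hse : ∀ p : ℕ, ((f p fun _ => φ + b) - (f p fun _ => φ)) - R p = S p := by
        intro p
        simp only [hRdef]
        abel
      exact ((hT1.summable.sub hT2.summable).sub hRsum).congr hse
    have hge : (fun p : ℕ => (p:ℝ) • f p (fun i => if (i:ℕ) = 0 then ψ else φ))
        = fun p => h⁻¹ • S p := funext fun p => by rw [hSg p, inv_smul_smul₀ hzero]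
    rw [hge]
    exact hS'.const_smul _
  have hgS : HasSum S
      (h • ∑' p : ℕ, (p:ℝ) • f p (fun i => if (i:ℕ) = 0 then ψ else φ)) := by
    have h1 := hgsummable.hasSum.const_smul h
    have h2 : S = fun p : ℕ => h • ((p:ℝ) • f p (fun i => if (i:ℕ) = 0 then ψ else φ)) :=
      funext hSg
    rw [h2]
    exact h1
  have hRhas : HasSum R (f.sum (φ + b) - f.sum φ -
      h • ∑' p : ℕ, (p:ℝ) • f p (fun i => if (i:ℕ) = 0 then ψ else φ)) :=
    (hT1.sub hT2).sub hgS
  rw [← hRhas.tsum_eq]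
  calc ‖∑' p : ℕ, R p‖ ≤ ∑' p : ℕ, ‖R p‖ := norm_tsum_le_tsum_norm hnormR
    _ ≤ ∑' p : ℕ, c p := hnormR.tsum_le_tsum hRc hcsum
    _ = ∑' p : ℕ, (1/2 * ‖b‖^2) * ((p:ℝ) * ((p:ℝ) - 1) * ‖f p‖ * r ^ (p - 2)) := by
        congr 1
        funext p
        simp only [hcdef]
        ring
    _ = (1/2 * ‖b‖^2) * ∑' p : ℕ, (p:ℝ) * ((p:ℝ) - 1) * ‖f p‖ * r ^ (p - 2) := tsum_mul_left
    _ = (1 / 2) * (∑' p : ℕ, (p : ℝ) * ((p : ℝ) - 1) * ‖f p‖ * r ^ (p - 2)) * h ^ 2 * ‖ψ‖ ^ 2 := by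
        rw [hb, norm_smul, mul_pow, Real.norm_eq_abs, sq_abs]
        ring
end

section
/- Let X be a Banach space, r > 0, V = Σ_q V^(q) an analytic vector field on X with [[V]](r) := Σ_q ‖V^(q)‖_⊗ r^q < ∞, and f = Σ_p f^(p) a formal series with [[f]]^(1)(r) := Σ_p p‖f^(p)‖_⊗ r^{p−1} < ∞. Define the derivation (V·f)(φ) := δf_φ(V(φ)). Then V·f is a formal series whose homogeneous components satisfy ‖(V·f)^(m)‖_⊗ ≤ Σ_{p=1}^{m+1} p·‖V^{(m−p+1)}‖_⊗·‖f^(p)‖_⊗ (sum over p with m−p+1 ≥ 0), and consequently [[V·f]](r) ≤ [[V]](r)·[[f]]^(1)(r). -/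
open Finset

-- inclusion-exclusion kernel
lemma auxIE {m : ℕ} (R : Finset (Fin m)) :
    ∑ S ∈ (Finset.univ : Finset (Fin m)).powerset.filter (fun S => R ⊆ S),
      (-1:ℝ)^(m - S.card) = if R = Finset.univ then 1 else 0 := by
  have hsign : ∀ S : Finset (Fin m), (-1:ℝ)^(m - S.card) = (-1)^m * (-1)^(S.card) := by
    intro S
    have hle : S.card ≤ m := by simpa using Finset.card_le_card (Finset.subset_univ S)
    have : (-1:ℝ)^m = (-1)^(m - S.card) * (-1)^(S.card) := by
      rw [← pow_add]; congr 1; omega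
    rw [this, mul_assoc, ← pow_add]
    have : ((-1:ℝ)) ^ (#S + #S) = 1 := by
      rw [← two_mul, pow_mul]; norm_num
    rw [this, mul_one]
  have hbij : ∑ S ∈ (Finset.univ : Finset (Fin m)).powerset.filter (fun S => R ⊆ S),
      (-1:ℝ)^(S.card) = ∑ T ∈ Rᶜ.powerset, (-1:ℝ)^(R.card + T.card) := by
    refine Finset.sum_nbij' (fun S => S \ R) (fun T => R ∪ T) ?_ ?_ ?_ ?_ ?_
    · intro S hS
      simp only [mem_filter, mem_powerset] at hS
      simp only [mem_powerset]
      intro x hx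
      simp only [mem_sdiff] at hx
      simp [Finset.mem_compl, hx.2]
    · intro T hT
      simp only [mem_powerset] at hT
      simp only [mem_filter, mem_powerset]
      exact ⟨Finset.subset_univ _, Finset.subset_union_left⟩
    · intro S hS
      simp only [mem_filter, mem_powerset] at hS
      exact Finset.union_sdiff_of_subset hS.2
    · intro T hT
      simp only [mem_powerset] at hT
      refine Finset.union_sdiff_cancel_left ?_
      exact Finset.disjoint_left.2 fun x hxR hxT => by
        have := hT hxT; simp [Finset.mem_compl] at this; exact this hxR
    · intro S hS
      simp only [mem_filter, mem_powerset] at hS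
      congr 1
      have h1 := Finset.card_sdiff_of_subset hS.2
      have h2 := Finset.card_le_card hS.2
      simp only [h1]
      omega
  simp_rw [hsign]
  rw [← Finset.mul_sum, hbij]
  simp_rw [pow_add]
  rw [← Finset.mul_sum]
  have hcast : ∑ T ∈ Rᶜ.powerset, (-1:ℝ)^(T.card)
      = ((∑ T ∈ Rᶜ.powerset, (-1:ℤ)^(T.card) : ℤ) : ℝ) := by push_cast; rfl
  rw [hcast, Finset.sum_powerset_neg_one_pow_card]
  by_cases hR : R = Finset.univ
  · subst hR
    simp only [Finset.compl_univ, Finset.card_univ, Fintype.card_fin]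
    norm_num
    rw [← pow_add, ← two_mul, pow_mul]
    norm_num
  · rw [if_neg hR, if_neg (by simpa [Finset.compl_eq_empty_iff] using hR)]
    simp

lemma auxPolar {X : Type*} [AddCommGroup X] [Module ℝ X] {m : ℕ}
    (A : MultilinearMap ℝ (fun _ : Fin m => X) ℝ) (φ : Fin m → X) :
    ∑ S ∈ (Finset.univ : Finset (Fin m)).powerset,
        (-1:ℝ)^(m - S.card) * A (fun _ => ∑ i ∈ S, φ i)
      = ∑ σ : Equiv.Perm (Fin m), A (fun i => φ (σ i)) := by
  classical
  have step1 : ∀ S : Finset (Fin m),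
      A (fun _ => ∑ i ∈ S, φ i)
        = ∑ r ∈ Fintype.piFinset (fun _ : Fin m => S), A (fun i => φ (r i)) := by
    intro S
    exact A.map_sum_finset (fun _ j => φ j) (fun _ => S)
  calc
    ∑ S ∈ (Finset.univ : Finset (Fin m)).powerset,
        (-1:ℝ)^(m - S.card) * A (fun _ => ∑ i ∈ S, φ i)
      = ∑ S ∈ (Finset.univ : Finset (Fin m)).powerset,
          ∑ r ∈ (Finset.univ : Finset (Fin m → Fin m)).filter
              (fun r => Finset.image r Finset.univ ⊆ S),
            (-1:ℝ)^(m - S.card) * A (fun i => φ (r i)) := by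
        refine Finset.sum_congr rfl fun S _ => ?_
        rw [step1 S, Finset.mul_sum]
        refine Finset.sum_congr ?_ fun _ _ => rfl
        ext r
        simp [Fintype.mem_piFinset, Finset.image_subset_iff]
    _ = ∑ r ∈ (Finset.univ : Finset (Fin m → Fin m)),
          ∑ S ∈ (Finset.univ : Finset (Fin m)).powerset.filter
              (fun S => Finset.image r Finset.univ ⊆ S),
            (-1:ℝ)^(m - S.card) * A (fun i => φ (r i)) := by
        simp_rw [Finset.sum_filter]
        exact Finset.sum_comm
    _ = ∑ r ∈ (Finset.univ : Finset (Fin m → Fin m)),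
          (if Finset.image r Finset.univ = Finset.univ then (1:ℝ) else 0)
            * A (fun i => φ (r i)) := by
        refine Finset.sum_congr rfl fun r _ => ?_
        rw [← Finset.sum_mul, auxIE]
    _ = ∑ r ∈ (Finset.univ : Finset (Fin m → Fin m)).filter
          (fun r => Finset.image r Finset.univ = Finset.univ),
          A (fun i => φ (r i)) := by
        rw [Finset.sum_filter]
        refine Finset.sum_congr rfl fun r _ => ?_
        split <;> simp
    _ = ∑ σ : Equiv.Perm (Fin m), A (fun i => φ (σ i)) := by
        refine (Finset.sum_bij (fun (σ : Equiv.Perm (Fin m)) _ => (σ : Fin m → Fin m))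
          ?_ ?_ ?_ ?_).symm
        · intro σ _
          simp only [Finset.mem_filter, Finset.mem_univ, true_and]
          ext x
          simp only [Finset.mem_image, Finset.mem_univ, true_and, iff_true]
          exact ⟨σ.symm x, by simp⟩
        · intro σ _ τ _ h
          exact Equiv.coe_fn_injective h
        · intro r hr
          simp only [Finset.mem_filter, Finset.mem_univ, true_and] at hr
          have hsurj : Function.Surjective r := by
            intro y
            have : y ∈ Finset.image r Finset.univ := by rw [hr]; simp
            simpa using this
          have hbij : Function.Bijective r := Finite.surjective_iff_bijective.mp hsurj
          exact ⟨Equiv.ofBijective r hbij, Finset.mem_univ _, rfl⟩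
        · intro σ _
          rfl

lemma auxPolarSym {X : Type*} [AddCommGroup X] [Module ℝ X] {m : ℕ}
    (A : MultilinearMap ℝ (fun _ : Fin m => X) ℝ)
    (hA : ∀ (σ : Equiv.Perm (Fin m)) (φ : Fin m → X), A (fun i => φ (σ i)) = A φ)
    (φ : Fin m → X) :
    (m.factorial : ℝ) * A φ =
      ∑ S ∈ (Finset.univ : Finset (Fin m)).powerset,
        (-1:ℝ)^(m - S.card) * A (fun _ => ∑ i ∈ S, φ i) := by
  rw [auxPolar A φ]
  rw [Finset.sum_congr rfl fun σ _ => hA σ φ]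
  rw [Finset.sum_const, Finset.card_univ, Fintype.card_perm, Fintype.card_fin]
  simp [nsmul_eq_mul]


def auxg (m k : ℕ) (_hk : k ≤ m) : Fin (m - k) → Fin m :=
  fun j => ⟨j.1, by have := j.2; omega⟩

def auxh (m k : ℕ) (hk : k ≤ m) : Fin k → Fin m :=
  fun j => ⟨m - k + j.1, by have := j.2; omega⟩

lemma auxg_inj {m k : ℕ} (hk : k ≤ m) : Function.Injective (auxg m k hk) := by
  intro a b h
  have h2 : (auxg m k hk a).1 = (auxg m k hk b).1 := congrArg Fin.val h
  exact Fin.ext h2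

lemma auxh_inj {m k : ℕ} (hk : k ≤ m) : Function.Injective (auxh m k hk) := by
  intro a b h
  have : m - k + a.1 = m - k + b.1 := congrArg Fin.val h
  exact Fin.ext (by omega)

noncomputable def auxH {X : Type*} [NormedAddCommGroup X] [NormedSpace ℝ X]
    (m k : ℕ) (hk : k ≤ m)
    (F : ContinuousMultilinearMap ℝ (fun _ : Fin (k+1) => X) ℝ)
    (G : ContinuousMultilinearMap ℝ (fun _ : Fin (m-k) => X) X) :
    MultilinearMap ℝ (fun _ : Fin m => X) ℝ where
  toFun χ := F.curryLeft (G (fun j => χ (auxg m k hk j))) (fun j => χ (auxh m k hk j))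
  map_update_add' := by
    intro dec χ i x y
    by_cases hi : (i : ℕ) < m - k
    · set a : Fin (m - k) := ⟨i.1, hi⟩ with ha
      have hia : i = auxg m k hk a := Fin.ext rfl
      have hg : ∀ z : X, (fun j => Function.update χ i z (auxg m k hk j))
          = Function.update (fun j => χ (auxg m k hk j)) a z := by
        intro z; rw [hia]
        exact Function.update_comp_eq_of_injective' χ (auxg_inj hk) a z
      have hh : ∀ z : X, (fun j => Function.update χ i z (auxh m k hk j))
          = fun j => χ (auxh m k hk j) := by
        intro z
        refine Function.update_comp_eq_of_forall_ne' χ z fun j => ?_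
        refine Fin.ne_of_val_ne ?_
        have := j.2
        simp only [auxh]
        omega
      simp only [hg, hh, ContinuousMultilinearMap.map_update_add, map_add,
        ContinuousMultilinearMap.add_apply]
    · set b : Fin k := ⟨i.1 - (m - k), by have := i.2; omega⟩ with hb
      have hib : i = auxh m k hk b := by
        refine Fin.ext ?_
        simp only [auxh]
        have := i.2
        simp only [hb]
        omega
      have hg : ∀ z : X, (fun j => Function.update χ i z (auxg m k hk j))
          = fun j => χ (auxg m k hk j) := by
        intro z
        refine Function.update_comp_eq_of_forall_ne' χ z fun j => ?_
        refine Fin.ne_of_val_ne ?_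
        have := j.2
        simp only [auxg]
        omega
      have hh : ∀ z : X, (fun j => Function.update χ i z (auxh m k hk j))
          = Function.update (fun j => χ (auxh m k hk j)) b z := by
        intro z; rw [hib]
        exact Function.update_comp_eq_of_injective' χ (auxh_inj hk) b z
      simp only [hg, hh, ContinuousMultilinearMap.map_update_add]
  map_update_smul' := by
    intro dec χ i c x
    by_cases hi : (i : ℕ) < m - k
    · set a : Fin (m - k) := ⟨i.1, hi⟩ with ha
      have hia : i = auxg m k hk a := Fin.ext rfl
      have hg : ∀ z : X, (fun j => Function.update χ i z (auxg m k hk j))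
          = Function.update (fun j => χ (auxg m k hk j)) a z := by
        intro z; rw [hia]
        exact Function.update_comp_eq_of_injective' χ (auxg_inj hk) a z
      have hh : ∀ z : X, (fun j => Function.update χ i z (auxh m k hk j))
          = fun j => χ (auxh m k hk j) := by
        intro z
        refine Function.update_comp_eq_of_forall_ne' χ z fun j => ?_
        refine Fin.ne_of_val_ne ?_
        have := j.2
        simp only [auxh]
        omega
      simp only [hg, hh, ContinuousMultilinearMap.map_update_smul, map_smul,
        ContinuousMultilinearMap.smul_apply]
    · set b : Fin k := ⟨i.1 - (m - k), by have := i.2; omega⟩ with hb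
      have hib : i = auxh m k hk b := by
        refine Fin.ext ?_
        simp only [auxh]
        have := i.2
        simp only [hb]
        omega
      have hg : ∀ z : X, (fun j => Function.update χ i z (auxg m k hk j))
          = fun j => χ (auxg m k hk j) := by
        intro z
        refine Function.update_comp_eq_of_forall_ne' χ z fun j => ?_
        refine Fin.ne_of_val_ne ?_
        have := j.2
        simp only [auxg]
        omega
      have hh : ∀ z : X, (fun j => Function.update χ i z (auxh m k hk j))
          = Function.update (fun j => χ (auxh m k hk j)) b z := by
        intro z; rw [hib]
        exact Function.update_comp_eq_of_injective' χ (auxh_inj hk) b z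
      simp only [hg, hh, ContinuousMultilinearMap.map_update_smul]

lemma auxH_apply {X : Type*} [NormedAddCommGroup X] [NormedSpace ℝ X]
    (m k : ℕ) (hk : k ≤ m)
    (F : ContinuousMultilinearMap ℝ (fun _ : Fin (k+1) => X) ℝ)
    (G : ContinuousMultilinearMap ℝ (fun _ : Fin (m-k) => X) X) (χ : Fin m → X) :
    auxH m k hk F G χ
      = F (Fin.cons (G (fun j => χ (auxg m k hk j))) (fun j => χ (auxh m k hk j))) := by
  simp [auxH, ContinuousMultilinearMap.curryLeft_apply]

lemma aux_prod_split {X : Type*} [NormedAddCommGroup X]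
    (m k : ℕ) (hk : k ≤ m) (χ : Fin m → X) :
    (∏ j : Fin (m - k), ‖χ (auxg m k hk j)‖) * ∏ j : Fin k, ‖χ (auxh m k hk j)‖
      = ∏ i : Fin m, ‖χ i‖ := by
  have hmk : m - k + k = m := by omega
  rw [← Equiv.prod_comp (finCongr hmk) (fun i => ‖χ i‖), Fin.prod_univ_add]
  congr 1 <;>
    refine Finset.prod_congr rfl fun j _ =>
      congrArg (fun i => ‖χ i‖) (Fin.ext (by simp [auxg, auxh]))

lemma auxH_bound {X : Type*} [NormedAddCommGroup X] [NormedSpace ℝ X]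
    (m k : ℕ) (hk : k ≤ m)
    (F : ContinuousMultilinearMap ℝ (fun _ : Fin (k+1) => X) ℝ)
    (G : ContinuousMultilinearMap ℝ (fun _ : Fin (m-k) => X) X) (χ : Fin m → X) :
    |auxH m k hk F G χ| ≤ ‖F‖ * ‖G‖ * ∏ i, ‖χ i‖ := by
  rw [auxH_apply]
  set v := G (fun j => χ (auxg m k hk j)) with hv
  set w := fun j : Fin k => χ (auxh m k hk j) with hw
  have h1 : |F (Fin.cons v w)| ≤ ‖F‖ * ∏ i : Fin (k+1), ‖(Fin.cons v w : Fin (k+1) → X) i‖ := by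
    have := F.le_opNorm (Fin.cons v w)
    simpa [Real.norm_eq_abs] using this
  have h2 : (∏ i : Fin (k+1), ‖(Fin.cons v w : Fin (k+1) → X) i‖) = ‖v‖ * ∏ j, ‖w j‖ := by
    rw [Fin.prod_univ_succ]
    simp
  have h3 : ‖v‖ ≤ ‖G‖ * ∏ j, ‖χ (auxg m k hk j)‖ := G.le_opNorm _
  calc |F (Fin.cons v w)| ≤ ‖F‖ * (‖v‖ * ∏ j, ‖w j‖) := by rw [← h2]; exact h1
    _ ≤ ‖F‖ * ((‖G‖ * ∏ j, ‖χ (auxg m k hk j)‖) * ∏ j, ‖w j‖) := by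
        refine mul_le_mul_of_nonneg_left ?_ (norm_nonneg F)
        exact mul_le_mul_of_nonneg_right h3 (Finset.prod_nonneg fun _ _ => norm_nonneg _)
    _ = ‖F‖ * ‖G‖ * ∏ i, ‖χ i‖ := by
        rw [mul_assoc (‖G‖), aux_prod_split m k hk χ]
        ring

set_option maxHeartbeats 1000000 in
/-- **Bound for the derivation `V·f` of a formal series by an analytic vector
field.** Let `V = Σ_q V^(q)` be an analytic vector field and `f = Σ_p f^(p)` a
formal series on a Banach space `X`, with `[[V]](r) < ∞` and `[[f]]^(1)(r) < ∞`.
If `W` is the formal series representing the derivation `(V·f)(φ) = δf_φ(V(φ))`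
(i.e. `W` has symmetric components and on the diagonal
`W^(m)(φ,…,φ) = Σ_{p+q=m+1} p·f^(p)(V^(q)(φ,…,φ), φ,…,φ)`), then its components
satisfy `‖W^(m)‖ ≤ Σ_{p=1}^{m+1} p‖V^{(m+1-p)}‖‖f^(p)‖` and consequently
`[[W]](r) ≤ [[V]](r)·[[f]]^(1)(r)`. -/
theorem derivation_of_formal_series_bound
    {X : Type*} [NormedAddCommGroup X] [NormedSpace ℝ X] [CompleteSpace X]
    (r : ℝ) (hr : 0 < r)
    (V : FormalMultilinearSeries ℝ X X) (f : FormalMultilinearSeries ℝ X ℝ)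
    (hVsym : ∀ (q : ℕ) (σ : Equiv.Perm (Fin q)) (φ : Fin q → X),
      V q (fun i => φ (σ i)) = V q φ)
    (hfsym : ∀ (p : ℕ) (σ : Equiv.Perm (Fin p)) (φ : Fin p → X),
      f p (fun i => φ (σ i)) = f p φ)
    (hV : Summable fun q : ℕ => ‖V q‖ * r ^ q)
    (hf : Summable fun p : ℕ => (p : ℝ) * ‖f p‖ * r ^ (p - 1))
    (W : FormalMultilinearSeries ℝ X ℝ)
    (hWsym : ∀ (m : ℕ) (σ : Equiv.Perm (Fin m)) (φ : Fin m → X),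
      W m (fun i => φ (σ i)) = W m φ)
    (hWdiag : ∀ (m : ℕ) (φ : X),
      W m (fun _ => φ) =
        ∑ p ∈ Finset.range (m + 2),
          (p : ℝ) * f p (fun i => if (i : ℕ) = 0 then V (m + 1 - p) (fun _ => φ) else φ)) :
    (∀ m : ℕ, ‖W m‖ ≤
        ∑ p ∈ Finset.range (m + 2), (p : ℝ) * ‖V (m + 1 - p)‖ * ‖f p‖) ∧
    Summable (fun m : ℕ => ‖W m‖ * r ^ m) ∧
    (∑' m : ℕ, ‖W m‖ * r ^ m) ≤
      (∑' q : ℕ, ‖V q‖ * r ^ q) * (∑' p : ℕ, (p : ℝ) * ‖f p‖ * r ^ (p - 1)) := by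
  classical
  have hcomp : ∀ m : ℕ, ‖W m‖ ≤
      ∑ p ∈ Finset.range (m + 2), (p : ℝ) * ‖V (m + 1 - p)‖ * ‖f p‖ := by
    intro m
    set C : ℝ := ∑ k ∈ Finset.range (m+1), ((k:ℝ)+1) * ‖f (k+1)‖ * ‖V (m-k)‖ with hCdef
    have hC0 : 0 ≤ C := by
      refine Finset.sum_nonneg fun k _ => ?_
      positivity
    have hCeq : (∑ p ∈ Finset.range (m + 2), (p : ℝ) * ‖V (m + 1 - p)‖ * ‖f p‖) = C := by
      rw [Finset.sum_range_succ' _ (m+1)]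
      simp only [Nat.cast_zero, zero_mul, add_zero, hCdef]
      refine Finset.sum_congr rfl fun k hk => ?_
      have hidx : m + 1 - (k + 1) = m - k := by omega
      rw [hidx]
      push_cast
      ring
    rw [hCeq]
    -- the dite-packaged auxiliary multilinear maps
    set HH : ℕ → MultilinearMap ℝ (fun _ : Fin m => X) ℝ := fun k =>
      if hk : k ≤ m then auxH m k hk (f (k+1)) (V (m-k)) else 0 with hHH
    have HHbound : ∀ k, k ≤ m → ∀ χ : Fin m → X,
        |HH k χ| ≤ ‖f (k+1)‖ * ‖V (m-k)‖ * ∏ i, ‖χ i‖ := by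
      intro k hk χ
      simp only [hHH, dif_pos hk]
      exact auxH_bound m k hk _ _ χ
    have HHdiag : ∀ k, k ≤ m → ∀ ψ : X,
        HH k (fun _ => ψ) = f (k+1)
          (Fin.cons (V (m-k) (fun _ => ψ)) (fun _ => ψ)) := by
      intro k hk ψ
      simp only [hHH, dif_pos hk]
      rw [auxH_apply]
    have key : ∀ ψ : X, W m (fun _ => ψ)
        = ∑ k ∈ Finset.range (m+1), ((k:ℝ)+1) * HH k (fun _ => ψ) := by
      intro ψ
      rw [hWdiag m ψ, Finset.sum_range_succ' _ (m+1)]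
      simp only [Nat.cast_zero, zero_mul, add_zero]
      refine Finset.sum_congr rfl fun k hk => ?_
      have hkm : k ≤ m := by
        have := Finset.mem_range.mp hk; omega
      rw [HHdiag k hkm ψ]
      have hidx : m + 1 - (k + 1) = m - k := by omega
      rw [hidx]
      have harg : (fun i : Fin (k+1) => if (i : ℕ) = 0 then V (m-k) (fun _ => ψ) else ψ)
          = Fin.cons (V (m-k) (fun _ => ψ)) (fun _ => ψ) := by
        funext i
        refine Fin.cases ?_ ?_ i
        · simp
        · intro j
          simp [Fin.val_succ]
      rw [harg]
      push_cast
      ring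
    -- the polarization identity
    have hfact : ∀ φ : Fin m → X, (m.factorial : ℝ) * W m φ
        = ∑ k ∈ Finset.range (m+1), ((k:ℝ)+1) *
            ∑ σ : Equiv.Perm (Fin m), HH k (fun i => φ (σ i)) := by
      intro φ
      have h1 := auxPolarSym (W m).toMultilinearMap
        (fun σ ψ => hWsym m σ ψ) φ
      simp only [ContinuousMultilinearMap.coe_coe] at h1
      rw [h1]
      have h2 : ∀ S : Finset (Fin m),
          (-1:ℝ)^(m - S.card) * W m (fun _ => ∑ i ∈ S, φ i)
            = ∑ k ∈ Finset.range (m+1),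
                ((k:ℝ)+1) * ((-1:ℝ)^(m - S.card) * HH k (fun _ => ∑ i ∈ S, φ i)) := by
        intro S
        rw [key, Finset.mul_sum]
        refine Finset.sum_congr rfl fun k _ => ?_
        ring
      rw [Finset.sum_congr rfl fun S _ => h2 S, Finset.sum_comm]
      refine Finset.sum_congr rfl fun k _ => ?_
      rw [← Finset.mul_sum]
      congr 1
      exact auxPolar (HH k) φ
    refine ContinuousMultilinearMap.opNorm_le_bound hC0 fun φ => ?_
    have hfpos : (0:ℝ) < (m.factorial : ℝ) := by
      exact_mod_cast Nat.factorial_pos m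
    rw [Real.norm_eq_abs]
    rw [← mul_le_mul_iff_of_pos_left hfpos]
    calc (m.factorial : ℝ) * |W m φ| = |(m.factorial : ℝ) * W m φ| := by
          rw [abs_mul, abs_of_pos hfpos]
      _ = |∑ k ∈ Finset.range (m+1), ((k:ℝ)+1) *
            ∑ σ : Equiv.Perm (Fin m), HH k (fun i => φ (σ i))| := by rw [hfact φ]
      _ ≤ ∑ k ∈ Finset.range (m+1), ((k:ℝ)+1) *
            ∑ σ : Equiv.Perm (Fin m), |HH k (fun i => φ (σ i))| := by
          refine (Finset.abs_sum_le_sum_abs _ _).trans ?_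
          refine Finset.sum_le_sum fun k _ => ?_
          rw [abs_mul, abs_of_pos (by positivity : (0:ℝ) < (k:ℝ)+1)]
          exact mul_le_mul_of_nonneg_left (Finset.abs_sum_le_sum_abs _ _)
            (by positivity)
      _ ≤ ∑ k ∈ Finset.range (m+1), ((k:ℝ)+1) *
            ∑ _σ : Equiv.Perm (Fin m),
              ‖f (k+1)‖ * ‖V (m-k)‖ * ∏ i, ‖φ i‖ := by
          refine Finset.sum_le_sum fun k hk => ?_
          have hkm : k ≤ m := by have := Finset.mem_range.mp hk; omega
          refine mul_le_mul_of_nonneg_left ?_ (by positivity)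
          refine Finset.sum_le_sum fun σ _ => ?_
          have := HHbound k hkm (fun i => φ (σ i))
          calc |HH k (fun i => φ (σ i))|
              ≤ ‖f (k+1)‖ * ‖V (m-k)‖ * ∏ i, ‖φ (σ i)‖ := this
            _ = ‖f (k+1)‖ * ‖V (m-k)‖ * ∏ i, ‖φ i‖ := by
                rw [Equiv.prod_comp σ (fun i => ‖φ i‖)]
      _ = (m.factorial : ℝ) * (C * ∏ i, ‖φ i‖) := by
          simp only [Finset.sum_const, Finset.card_univ, Fintype.card_perm,
            Fintype.card_fin, nsmul_eq_mul, hCdef]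
          rw [Finset.sum_mul, Finset.mul_sum]
          refine Finset.sum_congr rfl fun k _ => ?_
          ring
  refine ⟨hcomp, ?_⟩
  -- Cauchy product part
  set Gs : ℕ → ℝ := fun q => ‖V q‖ * r^q with hGs
  set Fs : ℕ → ℝ := fun k => ((k:ℝ)+1) * ‖f (k+1)‖ * r^k with hFs
  have hFsum : Summable Fs := by
    have h1 : Summable ((fun p : ℕ => (p : ℝ) * ‖f p‖ * r ^ (p - 1)) ∘ (fun n : ℕ => n + 1)) :=
      hf.comp_injective (add_left_injective 1)
    refine h1.congr fun n => ?_
    simp only [Function.comp]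
    simp only [Nat.add_sub_cancel, hFs]
    push_cast
    ring
  have hGn : Summable fun q => ‖Gs q‖ := by
    refine hV.abs.congr fun q => ?_
    rw [Real.norm_eq_abs]
  have hFn : Summable fun k => ‖Fs k‖ := by
    refine hFsum.abs.congr fun q => ?_
    rw [Real.norm_eq_abs]
  have hcauchy : Summable fun n => ∑ k ∈ Finset.range (n+1), Gs k * Fs (n-k) := by
    have := summable_norm_sum_mul_range_of_summable_norm hGn hFn
    exact this.of_norm
  have htsum_cauchy : (∑' n, ∑ k ∈ Finset.range (n+1), Gs k * Fs (n-k))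
      = (∑' q, Gs q) * (∑' k, Fs k) :=
    (tsum_mul_tsum_eq_tsum_sum_range_of_summable_norm hGn hFn).symm
  have hle : ∀ n : ℕ, ‖W n‖ * r^n ≤ ∑ k ∈ Finset.range (n+1), Gs k * Fs (n-k) := by
    intro n
    have h1 : ‖W n‖ * r^n ≤
        (∑ p ∈ Finset.range (n + 2), (p : ℝ) * ‖V (n + 1 - p)‖ * ‖f p‖) * r^n :=
      mul_le_mul_of_nonneg_right (hcomp n) (pow_nonneg hr.le n)
    refine h1.trans_eq ?_
    rw [Finset.sum_range_succ' _ (n+1)]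
    simp only [Nat.cast_zero, zero_mul, add_zero]
    -- reflect the cauchy sum
    have hrefl : ∑ k ∈ Finset.range (n+1), Gs k * Fs (n-k)
        = ∑ k ∈ Finset.range (n+1), Gs (n-k) * Fs (n-(n-k)) := by
      have := Finset.sum_range_reflect (fun k => Gs k * Fs (n-k)) (n+1)
      rw [← this]
      refine Finset.sum_congr rfl fun j hj => ?_
      have hjn : j ≤ n := by have := Finset.mem_range.mp hj; omega
      congr 2 <;> omega
    rw [hrefl]
    rw [Finset.sum_mul]
    refine Finset.sum_congr rfl fun j hj => ?_
    have hjn : j ≤ n := by have := Finset.mem_range.mp hj; omega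
    have h2 : n - (n - j) = j := by omega
    have hidx : n + 1 - (j + 1) = n - j := by omega
    rw [h2, hidx, hGs, hFs]
    simp only
    have hpow : r^(n-j) * r^j = r^n := by
      rw [← pow_add]; congr 1; omega
    push_cast
    calc ((j:ℝ)+1) * ‖V (n-j)‖ * ‖f (j+1)‖ * r^n
        = (‖V (n-j)‖ * r^(n-j)) * (((j:ℝ)+1) * ‖f (j+1)‖ * r^j) := by
          rw [← hpow]; ring
      _ = _ := rfl
  have hWsum : Summable (fun m : ℕ => ‖W m‖ * r ^ m) := by
    refine Summable.of_nonneg_of_le (fun n => by positivity) hle hcauchy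
  refine ⟨hWsum, ?_⟩
  have hts : (∑' m : ℕ, ‖W m‖ * r ^ m)
      ≤ ∑' n, ∑ k ∈ Finset.range (n+1), Gs k * Fs (n-k) :=
    Summable.tsum_le_tsum hle hWsum hcauchy
  rw [htsum_cauchy] at hts
  refine hts.trans_eq ?_
  congr 1
  rw [Summable.tsum_eq_zero_add hf]
  simp only [Nat.cast_zero, zero_mul, zero_add, CharP.cast_eq_zero]
  refine tsum_congr fun k => ?_
  simp only [Nat.add_sub_cancel, hFs]
  push_cast
  ring
end

section
/- Let X be a Banach space, r₀ > 0, k ≥ 1, and V₁,…,V_k analytic vector fields on X with [[V_a]](r) < ∞ for all r < r₀. For any r ∈ (0, r₀) and any formal series f with [[f]]^(k)(r) < ∞, the iterated derivation satisfies [[V_k· ⋯ V₁· f]](r) ≤ ([[V_k]]· ⋯ [[V₁]]· [[f]])(r), where for a nonnegative power series A(z), the operator [[V_a]]· acts by ([[V_a]]·A)(z) := [[V_a]](z)·A'(z). -/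
/-- The action of the scalar vector field with coefficients `x` on a power
series with coefficients `A`: coefficients of `X(z)·A'(z)`. -/
noncomputable def applyDCoeff (x A : ℕ → ℝ) : ℕ → ℝ :=
  fun m => ∑ p ∈ Finset.range (m + 2), (p : ℝ) * x (m + 1 - p) * A p

/-- Iterated action: coefficients of `[[V_a]]·⋯[[V_1]]·[[f]]`. -/
noncomputable def iterCoeff (x : ℕ → ℕ → ℝ) (A : ℕ → ℝ) : ℕ → (ℕ → ℝ)
  | 0 => A
  | (a + 1) => applyDCoeff (x a) (iterCoeff x A a)

open Finset

section Aux

variable {X : Type*} [NormedAddCommGroup X] [NormedSpace ℝ X]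


private lemma neg_one_pow_sub_real {a b : ℕ} (h : b ≤ a) :
    (-1 : ℝ) ^ (a - b) = (-1) ^ a * (-1) ^ b := by
  have h2 : (-1 : ℝ) ^ (a - b) * ((-1) ^ b * (-1) ^ b) = (-1) ^ (a - b) := by
    rw [← pow_add]
    simp [Even.neg_one_pow ⟨b, rfl⟩]
  calc (-1 : ℝ) ^ (a - b) = (-1) ^ (a - b) * ((-1) ^ b * (-1) ^ b) := h2.symm
    _ = (-1) ^ (a - b + b) * (-1) ^ b := by rw [pow_add]; ring
    _ = (-1) ^ a * (-1) ^ b := by rw [Nat.sub_add_cancel h]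

private lemma sum_superset_neg_one {m : ℕ} (R : Finset (Fin m)) :
    ∑ s ∈ (univ : Finset (Fin m)).powerset,
      (if R ⊆ s then ((-1 : ℝ)) ^ (m - s.card) else 0) =
      if R = univ then 1 else 0 := by
  classical
  rw [← Finset.sum_filter]
  have hbij : ∑ s ∈ ((univ : Finset (Fin m)).powerset.filter (fun s => R ⊆ s)),
      ((-1 : ℝ)) ^ (m - s.card) = ∑ t ∈ Rᶜ.powerset, ((-1 : ℝ)) ^ (Rᶜ.card - t.card) := by
    refine Finset.sum_nbij' (fun s => s \ R) (fun t => R ∪ t) ?_ ?_ ?_ ?_ ?_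
    · intro s hs
      simp only [Finset.mem_filter, Finset.mem_powerset] at hs
      simp only [Finset.mem_powerset]
      intro x hx
      simp only [Finset.mem_sdiff] at hx
      simp [Finset.mem_compl, hx.2]
    · intro t ht
      simp only [Finset.mem_powerset] at ht
      simp only [Finset.mem_filter, Finset.mem_powerset]
      exact ⟨Finset.subset_univ _, Finset.subset_union_left⟩
    · intro s hs
      simp only [Finset.mem_filter, Finset.mem_powerset] at hs
      exact Finset.union_sdiff_of_subset hs.2
    · intro t ht
      simp only [Finset.mem_powerset] at ht
      apply Finset.union_sdiff_cancel_left
      rw [Finset.disjoint_left]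
      intro x hxR hxt
      have := ht hxt
      simp [Finset.mem_compl, hxR] at this
    · intro s hs
      simp only [Finset.mem_filter, Finset.mem_powerset] at hs
      show ((-1 : ℝ)) ^ (m - s.card) = ((-1 : ℝ)) ^ (Rᶜ.card - (s \ R).card)
      congr 1
      have hdisj : Disjoint R (s \ R) := Finset.disjoint_sdiff
      have hcard : s.card = R.card + (s \ R).card := by
        rw [← Finset.card_union_of_disjoint hdisj, Finset.union_sdiff_of_subset hs.2]
      have hRc : Rᶜ.card = m - R.card := by
        rw [Finset.card_compl, Fintype.card_fin]
      have hRle : R.card ≤ m := by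
        simpa [Fintype.card_fin] using Finset.card_le_univ R
      omega
  rw [hbij]
  have : ∀ t ∈ Rᶜ.powerset, ((-1 : ℝ)) ^ (Rᶜ.card - t.card)
      = ((-1 : ℝ)) ^ Rᶜ.card * (-1) ^ t.card := by
    intro t ht
    exact neg_one_pow_sub_real (Finset.card_le_card (Finset.mem_powerset.1 ht))
  rw [Finset.sum_congr rfl this, ← Finset.mul_sum]
  have hz : (∑ t ∈ Rᶜ.powerset, ((-1 : ℝ)) ^ t.card) = if Rᶜ = ∅ then 1 else 0 := by
    have := Finset.sum_powerset_neg_one_pow_card (x := Rᶜ)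
    have := congrArg (fun z : ℤ => (z : ℝ)) this
    push_cast at this
    exact this
  rw [hz]
  by_cases h : Rᶜ = ∅
  · have hR : R = univ := by
      rwa [Finset.compl_eq_empty_iff] at h
    simp [h, hR]
  · have hR : ¬ R = univ := by
      intro hu; exact h (by simp [hu])
    simp [h, hR]

private lemma polarization {m : ℕ}
    (T : ContinuousMultilinearMap ℝ (fun _ : Fin m => X) ℝ)
    (hT : ∀ (σ : Equiv.Perm (Fin m)) (φ : Fin m → X), T (fun i => φ (σ i)) = T φ)
    (φ : Fin m → X) :
    (m.factorial : ℝ) * T φ =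
      ∑ s ∈ (univ : Finset (Fin m)).powerset,
        (-1 : ℝ) ^ (m - s.card) * T (fun _ => ∑ i ∈ s, φ i) := by
  classical
  symm
  have expand : ∀ s : Finset (Fin m), T (fun _ => ∑ i ∈ s, φ i)
      = ∑ g ∈ Fintype.piFinset (fun _ : Fin m => s), T (fun i => φ (g i)) := by
    intro s
    exact T.toMultilinearMap.map_sum_finset (fun _ j => φ j) (fun _ => s)
  have piEq : ∀ s : Finset (Fin m), Fintype.piFinset (fun _ : Fin m => s)
      = (univ : Finset (Fin m → Fin m)).filter (fun g => ∀ i, g i ∈ s) := by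
    intro s; ext g; simp [Fintype.mem_piFinset]
  calc
    ∑ s ∈ (univ : Finset (Fin m)).powerset,
        (-1 : ℝ) ^ (m - s.card) * T (fun _ => ∑ i ∈ s, φ i)
      = ∑ s ∈ (univ : Finset (Fin m)).powerset, ∑ g ∈ (univ : Finset (Fin m → Fin m)),
          (if ∀ i, g i ∈ s then (-1 : ℝ) ^ (m - s.card) * T (fun i => φ (g i)) else 0) := by
        refine Finset.sum_congr rfl fun s _ => ?_
        rw [expand s, piEq s, Finset.sum_filter, Finset.mul_sum]
        simp only [mul_ite, mul_zero]
    _ = ∑ g ∈ (univ : Finset (Fin m → Fin m)),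
          (∑ s ∈ (univ : Finset (Fin m)).powerset,
            (if Finset.image g univ ⊆ s then (-1 : ℝ) ^ (m - s.card) else 0)) *
              T (fun i => φ (g i)) := by
        rw [Finset.sum_comm]
        refine Finset.sum_congr rfl fun g _ => ?_
        rw [Finset.sum_mul]
        refine Finset.sum_congr rfl fun s _ => ?_
        have hiff : (∀ i, g i ∈ s) ↔ Finset.image g univ ⊆ s := by
          simp [Finset.image_subset_iff]
        rw [ite_mul, zero_mul]
        simp only [hiff]
    _ = ∑ g ∈ (univ : Finset (Fin m → Fin m)),
          (if Finset.image g univ = univ then (1:ℝ) else 0) * T (fun i => φ (g i)) := by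
        refine Finset.sum_congr rfl fun g _ => ?_
        rw [sum_superset_neg_one]
    _ = ∑ g ∈ (univ : Finset (Fin m → Fin m)).filter (fun g => Finset.image g univ = univ),
          T (fun i => φ (g i)) := by
        rw [Finset.sum_filter]
        refine Finset.sum_congr rfl fun g _ => ?_
        split <;> simp
    _ = ∑ σ : Equiv.Perm (Fin m), T (fun i => φ (σ i)) := by
        refine (Finset.sum_bij' (fun (g : Fin m → Fin m)
            (hg : g ∈ (univ : Finset (Fin m → Fin m)).filter
              (fun g => Finset.image g univ = univ)) =>
              Equiv.ofBijective g (by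
                rw [Finset.mem_filter] at hg
                refine Finite.surjective_iff_bijective.1 ?_
                intro y
                have : y ∈ Finset.image g univ := by rw [hg.2]; exact Finset.mem_univ y
                rcases Finset.mem_image.1 this with ⟨x, _, hx⟩
                exact ⟨x, hx⟩))
            (fun σ _ => ⇑σ) ?_ ?_ ?_ ?_ ?_)
        · intro g hg; exact Finset.mem_univ _
        · intro σ _
          simp only [Finset.mem_filter, Finset.mem_univ, true_and]
          ext y
          simp only [Finset.mem_image, Finset.mem_univ, true_and, iff_true]
          exact ⟨σ.symm y, σ.apply_symm_apply y⟩
        · intro g hg; rfl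
        · intro σ _; ext x; simp [Equiv.ofBijective]
        · intro g hg; rfl
    _ = (m.factorial : ℝ) * T φ := by
        have : ∀ σ : Equiv.Perm (Fin m), T (fun i => φ (σ i)) = T φ := fun σ => hT σ φ
        rw [Finset.sum_congr rfl fun σ _ => this σ, Finset.sum_const, Finset.card_univ,
          Fintype.card_perm, Fintype.card_fin, nsmul_eq_mul]

private lemma symm_ext {m : ℕ}
    (T S : ContinuousMultilinearMap ℝ (fun _ : Fin m => X) ℝ)
    (hT : ∀ (σ : Equiv.Perm (Fin m)) (φ : Fin m → X), T (fun i => φ (σ i)) = T φ)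
    (hS : ∀ (σ : Equiv.Perm (Fin m)) (φ : Fin m → X), S (fun i => φ (σ i)) = S φ)
    (hdiag : ∀ x : X, T (fun _ => x) = S (fun _ => x)) : T = S := by
  ext φ
  have h1 := polarization T hT φ
  have h2 := polarization S hS φ
  have h3 : (m.factorial : ℝ) * T φ = (m.factorial : ℝ) * S φ := by
    rw [h1, h2]
    exact Finset.sum_congr rfl fun s _ => by rw [hdiag]
  exact mul_left_cancel₀ (by exact_mod_cast m.factorial_ne_zero) h3

/-- The norm bound for one derivation step. -/
private lemma norm_step_le
    (g : FormalMultilinearSeries ℝ X ℝ) (v : FormalMultilinearSeries ℝ X X)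
    (m : ℕ) (F : ContinuousMultilinearMap ℝ (fun _ : Fin m => X) ℝ)
    (hFsym : ∀ (σ : Equiv.Perm (Fin m)) (φ : Fin m → X), F (fun i => φ (σ i)) = F φ)
    (hFdiag : ∀ ψ : X, F (fun _ => ψ) = ∑ p ∈ Finset.range (m+2),
      (p : ℝ) * g p (fun i => if (i : ℕ) = 0 then v (m+1-p) (fun _ => ψ) else ψ)) :
    ‖F‖ ≤ ∑ p ∈ Finset.range (m+2), (p : ℝ) * ‖v (m+1-p)‖ * ‖g p‖ := by
  classical
  -- the building blocks
  let H : ℕ → ContinuousMultilinearMap ℝ (fun _ : Fin m => X) ℝ := fun n =>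
    if h : n ≤ m then
      (((g (n+1)).curryLeft.compContinuousMultilinearMap (v (m - n))).uncurrySum).domDomCongr
        (finSumFinEquiv.trans (finCongr (Nat.sub_add_cancel h)))
    else 0
  have Happly : ∀ (n : ℕ) (h : n ≤ m) (φ : Fin m → X),
      H n φ = g (n+1) (Fin.cons
        (v (m - n) (fun j => φ ((finSumFinEquiv.trans (finCongr (Nat.sub_add_cancel h)))
          (Sum.inl j))))
        (fun i => φ ((finSumFinEquiv.trans (finCongr (Nat.sub_add_cancel h))) (Sum.inr i)))) := by
    intro n h φ
    simp only [H, dif_pos h]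
    rfl
  have Hdiag : ∀ (n : ℕ), n ≤ m → ∀ ψ : X,
      H n (fun _ => ψ) = g (n+1) (fun i => if (i : ℕ) = 0 then v (m - n) (fun _ => ψ) else ψ) := by
    intro n h ψ
    rw [Happly n h]
    congr 1
    funext i
    refine Fin.cases ?_ (fun j => ?_) i
    · simp
    · simp [Fin.cons]
  have Hnorm : ∀ n : ℕ, n ≤ m → ‖H n‖ ≤ ‖g (n+1)‖ * ‖v (m - n)‖ := by
    intro n h
    simp only [H, dif_pos h]
    rw [ContinuousMultilinearMap.norm_domDomCongr]
    have heq : ‖(((g (n+1)).curryLeft.compContinuousMultilinearMap (v (m - n))).uncurrySum)‖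
        = ‖((g (n+1)).curryLeft.compContinuousMultilinearMap (v (m - n)))‖ :=
      (ContinuousMultilinearMap.currySumEquiv ℝ (Fin (m - n)) (Fin n) X ℝ).symm.norm_map _
    rw [heq]
    refine le_trans (ContinuousLinearMap.norm_compContinuousMultilinearMap_le _ _) ?_
    rw [ContinuousMultilinearMap.curryLeft_norm]
  -- the symmetrized candidate
  let G : ContinuousMultilinearMap ℝ (fun _ : Fin m => X) ℝ :=
    (m.factorial : ℝ)⁻¹ • ∑ n ∈ Finset.range (m+1), ((n : ℝ) + 1) •
      ∑ σ : Equiv.Perm (Fin m), (H n).domDomCongr σ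
  have Gapply : ∀ φ : Fin m → X, G φ = (m.factorial : ℝ)⁻¹ *
      ∑ n ∈ Finset.range (m+1), ((n : ℝ) + 1) *
        ∑ σ : Equiv.Perm (Fin m), H n (fun i => φ (σ i)) := by
    intro φ
    simp only [G, ContinuousMultilinearMap.smul_apply, ContinuousMultilinearMap.sum_apply,
      ContinuousMultilinearMap.domDomCongr_apply, smul_eq_mul]
  have Gsym : ∀ (τ : Equiv.Perm (Fin m)) (φ : Fin m → X), G (fun i => φ (τ i)) = G φ := by
    intro τ φ
    rw [Gapply, Gapply]
    congr 1
    refine Finset.sum_congr rfl fun n _ => ?_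
    congr 1
    exact Fintype.sum_bijective (fun σ : Equiv.Perm (Fin m) => τ * σ)
      (Group.mulLeft_bijective τ) _ _ (fun σ => rfl)
  have Gdiag : ∀ ψ : X, G (fun _ => ψ) = F (fun _ => ψ) := by
    intro ψ
    rw [Gapply, hFdiag]
    have h1 : ∀ n ∈ Finset.range (m+1), ((n:ℝ)+1) * (∑ σ : Equiv.Perm (Fin m),
        H n (fun _ => ψ)) = ((n:ℝ)+1) * (m.factorial : ℝ) *
        g (n+1) (fun i => if (i : ℕ) = 0 then v (m - n) (fun _ => ψ) else ψ) := by
      intro n hn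
      have hnm : n ≤ m := by
        have := Finset.mem_range.1 hn; omega
      rw [Finset.sum_congr rfl (fun σ _ => Hdiag n hnm ψ), Finset.sum_const,
        Finset.card_univ, Fintype.card_perm, Fintype.card_fin, nsmul_eq_mul]
      ring
    rw [Finset.sum_congr rfl h1]
    have hsub : ∀ n : ℕ, m + 1 - (n + 1) = m - n := fun n => by omega
    rw [Finset.sum_range_succ'
      (fun p => (p : ℝ) * g p (fun i => if (i : ℕ) = 0 then v (m+1-p) (fun _ => ψ) else ψ))
      (m+1)]
    have hfac : (m.factorial : ℝ) ≠ 0 := by exact_mod_cast m.factorial_ne_zero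
    rw [Finset.mul_sum]
    simp only [Nat.cast_zero, zero_mul, add_zero, Nat.cast_add, Nat.cast_one]
    refine Finset.sum_congr rfl fun n _ => ?_
    rw [hsub n]
    field_simp
  have hFG : F = G := symm_ext F G hFsym Gsym (fun ψ => (Gdiag ψ).symm)
  rw [hFG]
  have hGnorm : ‖G‖ ≤ (m.factorial : ℝ)⁻¹ *
      ∑ n ∈ Finset.range (m+1), ((n:ℝ)+1) * ((m.factorial : ℝ) *
        (‖g (n+1)‖ * ‖v (m - n)‖)) := by
    have h0 : ‖G‖ ≤ (m.factorial : ℝ)⁻¹ *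
        ‖∑ n ∈ Finset.range (m+1), ((n : ℝ) + 1) •
          ∑ σ : Equiv.Perm (Fin m), (H n).domDomCongr σ‖ := by
      refine le_trans (ContinuousMultilinearMap.opNorm_smul_le _ _) ?_
      rw [Real.norm_eq_abs, abs_of_nonneg (by positivity)]
    refine le_trans h0 ?_
    gcongr
    refine le_trans (norm_sum_le _ _) ?_
    refine Finset.sum_le_sum fun n hn => ?_
    have hnm : n ≤ m := by
      have := Finset.mem_range.1 hn; omega
    refine le_trans (ContinuousMultilinearMap.opNorm_smul_le _ _) ?_
    rw [Real.norm_eq_abs, abs_of_nonneg (by positivity)]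
    gcongr
    refine le_trans (norm_sum_le _ _) ?_
    have hterm : ∀ σ : Equiv.Perm (Fin m), ‖(H n).domDomCongr σ‖ = ‖H n‖ := fun σ =>
      ContinuousMultilinearMap.norm_domDomCongr ℝ X ℝ σ (H n)
    rw [Finset.sum_congr rfl fun σ _ => hterm σ, Finset.sum_const, Finset.card_univ,
      Fintype.card_perm, Fintype.card_fin, nsmul_eq_mul]
    exact mul_le_mul_of_nonneg_left (Hnorm n hnm) (by positivity)
  refine le_trans hGnorm ?_
  rw [Finset.sum_range_succ' (fun p => (p : ℝ) * ‖v (m+1-p)‖ * ‖g p‖) (m+1)]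
  have hfac : (m.factorial : ℝ) ≠ 0 := by exact_mod_cast m.factorial_ne_zero
  rw [Finset.mul_sum]
  simp only [Nat.cast_zero, zero_mul, add_zero, Nat.cast_add, Nat.cast_one]
  refine le_of_eq (Finset.sum_congr rfl fun n _ => ?_)
  rw [show m + 1 - (n + 1) = m - n from by omega]
  field_simp

private lemma desc_mono {d e n : ℕ} (hde : d ≤ e) (hen : e ≤ n) :
    n.descFactorial d ≤ n.descFactorial e := by
  induction e with
  | zero => interval_cases d; rfl
  | succ e ih =>
    rcases Nat.eq_or_lt_of_le hde with h | h
    · subst h; exact le_refl _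
    · have hd : d ≤ e := by omega
      have h1 : n.descFactorial d ≤ n.descFactorial e := ih hd (by omega)
      refine le_trans h1 ?_
      rw [Nat.descFactorial_succ]
      have : 1 ≤ n - e := by omega
      calc n.descFactorial e = 1 * n.descFactorial e := (one_mul _).symm
        _ ≤ (n - e) * n.descFactorial e := Nat.mul_le_mul_right _ this

private lemma comb_bound (d : ℕ) : ∀ q p : ℕ, d + 1 ≤ p →
    (q + p - 1).descFactorial d ≤ (q+1)^d * (p-1).descFactorial d := by
  induction d with
  | zero => intro q p _; simp
  | succ d ih =>
    intro q p hp
    have hple : d + 1 ≤ p := by omega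
    have h1 : q + p - 1 - d = q + (p - 1 - d) := by omega
    have h2 : 1 ≤ p - 1 - d := by omega
    have h3 : q + p - 1 - d ≤ (q + 1) * (p - 1 - d) := by
      have : q ≤ q * (p - 1 - d) := Nat.le_mul_of_pos_right q (by omega)
      have hexp : (q + 1) * (p - 1 - d) = q * (p - 1 - d) + (p - 1 - d) := by ring
      omega
    calc (q + p - 1).descFactorial (d+1) = (q + p - 1 - d) * (q + p - 1).descFactorial d :=
          Nat.descFactorial_succ _ _
      _ ≤ ((q + 1) * (p - 1 - d)) * ((q+1)^d * (p-1).descFactorial d) :=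
          Nat.mul_le_mul h3 (ih q p hple)
      _ = (q+1)^(d+1) * ((p - 1 - d) * (p-1).descFactorial d) := by ring
      _ = (q+1)^(d+1) * (p-1).descFactorial (d+1) := by rw [← Nat.descFactorial_succ]

private lemma summable_antidiag {u : ℕ × ℕ → ℝ} (hu : Summable u) :
    Summable fun n => ∑ kl ∈ Finset.HasAntidiagonal.antidiagonal n, u kl := by
  have h' : Summable fun x : Σ n : ℕ, Finset.HasAntidiagonal.antidiagonal n => u x.2 :=
    (Finset.HasAntidiagonal.sigmaAntidiagonalEquivProd.summable_iff).2 hu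
  conv => congr; ext; rw [← Finset.sum_finset_coe, ← tsum_fintype (L := SummationFilter.unconditional _)]
  exact h'.sigma' fun n => (hasSum_fintype _).summable

private lemma geom_poly_summable (d : ℕ) {x : ℕ → ℝ} (hx0 : ∀ q, 0 ≤ x q) {r r' : ℝ}
    (hr : 0 < r) (hrr' : r < r') (hsum : Summable fun q => x q * r'^q) :
    Summable fun q : ℕ => ((q:ℝ)+1)^d * x q * r^q := by
  have hr' : (0:ℝ) < r' := lt_trans hr hrr'
  set t : ℝ := r / r' with ht
  have ht0 : 0 < t := div_pos hr hr'
  have ht1 : t < 1 := (div_lt_one hr').2 hrr'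
  have hCset : ∀ q, x q * r'^q ≤ ∑' q, x q * r'^q := fun q =>
    Summable.le_tsum hsum q (fun j _ => mul_nonneg (hx0 j) (by positivity))
  set C : ℝ := ∑' q, x q * r'^q with hC
  have hC0 : 0 ≤ C := tsum_nonneg (fun q => mul_nonneg (hx0 q) (by positivity))
  have h1 : Summable fun q : ℕ => ((q:ℝ)+1)^d * t^q := by
    have hnorm : ‖t‖ < 1 := by rw [Real.norm_eq_abs, abs_of_pos ht0]; exact ht1
    have hgeo : Summable fun n : ℕ => (n:ℝ)^d * t^n :=
      summable_pow_mul_geometric_of_norm_lt_one (k := d) hnorm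
    have hone : Summable (fun q : ℕ => if q = 0 then (1:ℝ) else 0) :=
      summable_of_ne_finset_zero (s := {0}) (fun b hb => by
        rw [if_neg]; simpa using hb)
    refine Summable.of_nonneg_of_le (fun q => by positivity) (fun q => ?_)
      ((hgeo.mul_left ((2:ℝ)^d)).add hone)
    rcases Nat.eq_zero_or_pos q with h0 | h0
    · subst h0; simp
    · have hq1 : ((q:ℝ)+1) ≤ 2 * q := by
        have : (1:ℝ) ≤ (q:ℝ) := by exact_mod_cast h0
        linarith
      have hpow : ((q:ℝ)+1)^d ≤ 2^d * (q:ℝ)^d := by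
        calc ((q:ℝ)+1)^d ≤ (2*(q:ℝ))^d := pow_le_pow_left₀ (by positivity) hq1 d
          _ = 2^d * (q:ℝ)^d := mul_pow 2 _ d
      have h2 : ((q:ℝ)+1)^d * t^q ≤ 2^d * (q:ℝ)^d * t^q :=
        mul_le_mul_of_nonneg_right hpow (by positivity)
      refine le_trans h2 ?_
      rw [if_neg (by omega)]
      rw [mul_assoc]
      linarith
  refine Summable.of_nonneg_of_le
    (fun q => mul_nonneg (mul_nonneg (by positivity) (hx0 q)) (by positivity))
    (fun q => ?_) (h1.mul_left C)
  have hrq : r^q = r'^q * t^q := by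
    have hrt : r' * t = r := by rw [ht]; field_simp
    rw [← mul_pow, hrt]
  calc ((q:ℝ)+1)^d * x q * r^q = (x q * r'^q) * (((q:ℝ)+1)^d * t^q) := by rw [hrq]; ring
    _ ≤ C * (((q:ℝ)+1)^d * t^q) := by
        refine mul_le_mul_of_nonneg_right (hCset q) (by positivity)

set_option maxHeartbeats 1600000 in
private lemma sumStep {x A : ℕ → ℝ} (hx0 : ∀ q, 0 ≤ x q) (hA0 : ∀ p, 0 ≤ A p) {r : ℝ}
    (hr : 0 < r) (d : ℕ)
    (hx : Summable fun q : ℕ => ((q:ℝ)+1)^d * x q * r^q)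
    (hA : Summable fun p : ℕ => (p.descFactorial (d+1) : ℝ) * A p * r ^ (p - (d+1))) :
    Summable fun m : ℕ => (m.descFactorial d : ℝ) * applyDCoeff x A m * r ^ (m - d) := by
  classical
  set u : ℕ × ℕ → ℝ := fun qp =>
    ((qp.1 + qp.2 - 1).descFactorial d : ℝ) * qp.2 * x qp.1 * A qp.2 *
      r ^ (qp.1 + qp.2 - 1 - d) with hu_def
  have hu0 : ∀ qp, 0 ≤ u qp := fun qp =>
    mul_nonneg (mul_nonneg (mul_nonneg (mul_nonneg (by positivity) (by positivity))
      (hx0 _)) (hA0 _)) (by positivity)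
  -- each column with fixed small second coordinate is summable
  have hcol : ∀ j : ℕ, j ≤ d + 1 → Summable (fun q : ℕ =>
      ((q + j - 1).descFactorial d : ℝ) * j * x q * A j * r ^ (q + j - 1 - d)) := by
    intro j hj
    refine (summable_nat_add_iff (d+1)).1 ?_
    set K : ℝ := ((d:ℝ)+1)^d * j * A j * r^j * (r^(d+1))⁻¹ with hK
    refine Summable.of_nonneg_of_le (fun q => ?_) (fun q => ?_)
      (((summable_nat_add_iff (d+1)).2 hx).mul_left K)
    · exact mul_nonneg (mul_nonneg (mul_nonneg (mul_nonneg (by positivity) (by positivity))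
        (hx0 _)) (hA0 _)) (by positivity)
    · set Q := q + (d + 1) with hQ
      have hQd : d + 1 ≤ Q := by omega
      have hfacN : (Q + j - 1).descFactorial d ≤ ((Q+1) * (d+1))^d := by
        refine le_trans (Nat.descFactorial_le_pow _ _) ?_
        refine Nat.pow_le_pow_left ?_ d
        have h2 : Q ≤ Q * (d+1) := Nat.le_mul_of_pos_right Q (by omega)
        have h3 : (Q+1) * (d+1) = Q * (d+1) + (d+1) := by ring
        omega
      have hfacR : ((Q + j - 1).descFactorial d : ℝ) ≤ ((Q:ℝ)+1)^d * ((d:ℝ)+1)^d := by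
        have := hfacN
        have hcast : (((Q+1) * (d+1))^d : ℕ) = (((Q:ℝ)+1)^d * ((d:ℝ)+1)^d : ℝ) := by
          push_cast
          rw [mul_pow]
        calc ((Q + j - 1).descFactorial d : ℝ) ≤ ((((Q+1) * (d+1))^d : ℕ) : ℝ) := by
              exact_mod_cast this
          _ = ((Q:ℝ)+1)^d * ((d:ℝ)+1)^d := hcast
      have hexp : r ^ (Q + j - 1 - d) = r^j * (r^Q * (r^(d+1))⁻¹) := by
        have h1 : r^Q = r^(Q - (d+1)) * r^(d+1) := by
          rw [← pow_add]
          congr 1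
          omega
        have h2 : Q + j - 1 - d = j + (Q - (d+1)) := by omega
        rw [h2, pow_add, h1]
        field_simp
      have hW : (0:ℝ) ≤ (j : ℝ) * x Q * A j * (r^j * (r^Q * (r^(d+1))⁻¹)) :=
        mul_nonneg (mul_nonneg (mul_nonneg (by positivity) (hx0 _)) (hA0 _)) (by positivity)
      calc ((Q + j - 1).descFactorial d : ℝ) * j * x Q * A j * r ^ (Q + j - 1 - d)
          = ((Q + j - 1).descFactorial d : ℝ) *
            ((j : ℝ) * x Q * A j * (r^j * (r^Q * (r^(d+1))⁻¹))) := by rw [hexp]; ring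
        _ ≤ (((Q:ℝ)+1)^d * ((d:ℝ)+1)^d) *
            ((j : ℝ) * x Q * A j * (r^j * (r^Q * (r^(d+1))⁻¹))) :=
            mul_le_mul_of_nonneg_right hfacR hW
        _ = K * (((Q:ℝ)+1)^d * x Q * r^Q) := by rw [hK]; ring
  -- summability of the exceptional columns
  have hw : Summable (fun qp : ℕ × ℕ => ∑ j ∈ Finset.range (d+2),
      if qp.2 = j then u qp else 0) := by
    refine summable_sum (fun j hj => ?_)
    have hjle : j ≤ d + 1 := by
      have := Finset.mem_range.1 hj; omega
    have hinj : Function.Injective (fun q : ℕ => ((q, j) : ℕ × ℕ)) := fun a b h => by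
      simpa using congrArg Prod.fst h
    refine (Function.Injective.summable_iff hinj ?_).1 ?_
    · intro qp hqp
      rcases qp with ⟨qq, pp⟩
      by_cases h : pp = j
      · exact absurd ⟨qq, by simp [h]⟩ hqp
      · rw [if_neg h]
    · refine (hcol j hjle).congr (fun q => ?_)
      simp [hu_def]
  -- the product-form majorant
  have hB : Summable (fun qp : ℕ × ℕ => (((qp.1:ℝ)+1)^d * x qp.1 * r^qp.1) *
      ((qp.2.descFactorial (d+1) : ℝ) * A qp.2 * r^(qp.2 - (d+1)))) := by
    exact Summable.mul_of_nonneg (f := fun q : ℕ => ((q:ℝ)+1)^d * x q * r^q)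
      (g := fun p : ℕ => (p.descFactorial (d+1) : ℝ) * A p * r^(p - (d+1))) hx hA
      (fun q => mul_nonneg (mul_nonneg (by positivity) (hx0 _)) (by positivity))
      (fun p => mul_nonneg (mul_nonneg (by positivity) (hA0 _)) (by positivity))
  -- u is summable
  have hu : Summable u := by
    refine Summable.of_nonneg_of_le hu0 (fun qp => ?_) (hB.add hw)
    rcases qp with ⟨q, p⟩
    rcases le_or_gt p (d+1) with hp | hp
    · -- small p: absorbed into w
      have hwp : (∑ j ∈ Finset.range (d+2), if (q,p).2 = j then u (q,p) else 0) = u (q,p) := by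
        rw [Finset.sum_ite_eq]
        rw [if_pos (Finset.mem_range.2 (by omega))]
      have hBp : (0:ℝ) ≤ (((q:ℝ)+1)^d * x q * r^q) *
          ((p.descFactorial (d+1) : ℝ) * A p * r^(p - (d+1))) :=
        mul_nonneg (mul_nonneg (mul_nonneg (by positivity) (hx0 _)) (by positivity))
          (mul_nonneg (mul_nonneg (by positivity) (hA0 _)) (by positivity))
      rw [hwp]
      exact le_add_of_nonneg_left hBp
    · -- large p: bounded by the product form
      have hwp : (∑ j ∈ Finset.range (d+2), if (q,p).2 = j then u (q,p) else 0) = 0 := by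
        refine Finset.sum_eq_zero (fun j hj => ?_)
        rw [if_neg]
        have := Finset.mem_range.1 hj
        omega
      rw [hwp, add_zero]
      have hdp : d + 1 ≤ p := by omega
      have hcombN : (q + p - 1).descFactorial d * p ≤ (q+1)^d * p.descFactorial (d+1) := by
        have h1 := comb_bound d q p hdp
        have h2 : p.descFactorial (d+1) = p * (p-1).descFactorial d := by
          have h3 : p - 1 + 1 = p := by omega
          rw [← h3, Nat.succ_descFactorial_succ, h3]
        calc (q + p - 1).descFactorial d * p ≤ ((q+1)^d * (p-1).descFactorial d) * p :=
              Nat.mul_le_mul_right p h1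
          _ = (q+1)^d * (p * (p-1).descFactorial d) := by ring
          _ = (q+1)^d * p.descFactorial (d+1) := by rw [← h2]
      have hcombR : ((q + p - 1).descFactorial d : ℝ) * p ≤
          ((q:ℝ)+1)^d * (p.descFactorial (d+1) : ℝ) := by
        have := hcombN
        have : (((q + p - 1).descFactorial d * p : ℕ) : ℝ) ≤
            (((q+1)^d * p.descFactorial (d+1) : ℕ) : ℝ) := by exact_mod_cast this
        push_cast at this
        convert this using 2 <;> push_cast <;> ring
      have hexp : r ^ (q + p - 1 - d) = r^q * r^(p - (d+1)) := by
        rw [← pow_add]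
        congr 1
        omega
      have hW : (0:ℝ) ≤ x q * A p * (r^q * r^(p-(d+1))) :=
        mul_nonneg (mul_nonneg (hx0 _) (hA0 _)) (by positivity)
      calc u (q, p) = (((q + p - 1).descFactorial d : ℝ) * p) *
            (x q * A p * (r^q * r^(p-(d+1)))) := by
            rw [hu_def]
            simp only []
            rw [hexp]
            ring
        _ ≤ (((q:ℝ)+1)^d * (p.descFactorial (d+1) : ℝ)) *
            (x q * A p * (r^q * r^(p-(d+1)))) := mul_le_mul_of_nonneg_right hcombR hW
        _ = (((q:ℝ)+1)^d * x q * r^q) *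
            ((p.descFactorial (d+1) : ℝ) * A p * r^(p - (d+1))) := by ring
  -- regroup along antidiagonals
  have hanti : Summable fun m : ℕ => ∑ kl ∈ Finset.HasAntidiagonal.antidiagonal (m+1), u kl :=
    (summable_nat_add_iff (f := fun m : ℕ => ∑ kl ∈ Finset.HasAntidiagonal.antidiagonal m, u kl) 1).2
      (summable_antidiag hu)
  refine hanti.congr (fun m => ?_)
  rw [Finset.Nat.sum_antidiagonal_eq_sum_range_succ_mk]
  have hlhs : (∑ kl ∈ Finset.range (m+2), u (kl, m + 1 - kl)) =
      ∑ j ∈ Finset.range (m+2), (m.descFactorial d : ℝ) *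
        (((m + 1 - j : ℕ) : ℝ) * x j * A (m + 1 - j)) * r ^ (m - d) := by
    refine Finset.sum_congr rfl (fun j hjm => ?_)
    have hj : j ≤ m + 1 := by
      have := Finset.mem_range.1 hjm; omega
    rw [hu_def]
    simp only []
    have h1 : j + (m + 1 - j) - 1 = m := by omega
    rw [h1]
    ring
  rw [hlhs]
  unfold applyDCoeff
  rw [Finset.mul_sum, Finset.sum_mul]
  rw [← Finset.sum_range_reflect]
  refine Finset.sum_congr rfl (fun j hjm => ?_)
  have hj : j ≤ m + 1 := by
    have := Finset.mem_range.1 hjm; omega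
  have h1 : m + 2 - 1 - j = m + 1 - j := by omega
  have h2 : m + 1 - (m + 1 - j) = j := by omega
  rw [h1, h2]

end Aux

set_option maxHeartbeats 800000 in
/-- **Iterated derivation estimate.** -/
theorem iterated_derivation_estimate
    {X : Type*} [NormedAddCommGroup X] [NormedSpace ℝ X] [CompleteSpace X]
    (r₀ r : ℝ) (hr : 0 < r) (hrr₀ : r < r₀) (k : ℕ) (hk : 1 ≤ k)
    (V : ℕ → FormalMultilinearSeries ℝ X X)
    (hVsym : ∀ a < k, ∀ (q : ℕ) (σ : Equiv.Perm (Fin q)) (φ : Fin q → X),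
      V a q (fun i => φ (σ i)) = V a q φ)
    (hVsum : ∀ a < k, ∀ r' : ℝ, 0 ≤ r' → r' < r₀ →
      Summable fun q : ℕ => ‖V a q‖ * r' ^ q)
    (f : FormalMultilinearSeries ℝ X ℝ)
    (hfk : Summable fun p : ℕ => (p.descFactorial k : ℝ) * ‖f p‖ * r ^ (p - k))
    (fs : ℕ → FormalMultilinearSeries ℝ X ℝ)
    (hfs0 : fs 0 = f)
    (hsym : ∀ a ≤ k, ∀ (m : ℕ) (σ : Equiv.Perm (Fin m)) (φ : Fin m → X),
      fs a m (fun i => φ (σ i)) = fs a m φ)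
    (hstep : ∀ a < k, ∀ (m : ℕ) (φ : X),
      fs (a + 1) m (fun _ => φ) =
        ∑ p ∈ Finset.range (m + 2),
          (p : ℝ) * fs a p
            (fun i => if (i : ℕ) = 0 then V a (m + 1 - p) (fun _ => φ) else φ)) :
    Summable (fun m : ℕ => ‖fs k m‖ * r ^ m) ∧
    Summable (fun m : ℕ => iterCoeff (fun a q => ‖V a q‖) (fun p => ‖f p‖) k m * r ^ m) ∧
    (∑' m : ℕ, ‖fs k m‖ * r ^ m) ≤
      ∑' m : ℕ, iterCoeff (fun a q => ‖V a q‖) (fun p => ‖f p‖) k m * r ^ m := by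
  classical
  set x : ℕ → ℕ → ℝ := fun a q => ‖V a q‖ with hxdef
  set A0 : ℕ → ℝ := fun p => ‖f p‖ with hA0def
  set c : ℕ → ℕ → ℝ := iterCoeff x A0 with hcdef
  have hc0 : ∀ a m, 0 ≤ c a m := by
    intro a
    induction a with
    | zero => intro m; exact norm_nonneg _
    | succ a ih =>
      intro m
      show (0:ℝ) ≤ applyDCoeff (x a) (c a) m
      refine Finset.sum_nonneg fun p _ => ?_
      exact mul_nonneg (mul_nonneg (by positivity) (norm_nonneg _)) (ih p)
  have key : ∀ a : ℕ, a ≤ k →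
      (∀ m, ‖fs a m‖ ≤ c a m) ∧
      (∀ d : ℕ, a + d ≤ k → Summable (fun p : ℕ =>
        (p.descFactorial d : ℝ) * c a p * r ^ (p - d))) := by
    intro a
    induction a with
    | zero =>
      intro _
      constructor
      · intro m
        rw [hfs0]
        exact le_refl _
      · intro d hd
        have hdk : d ≤ k := by omega
        refine (summable_nat_add_iff k).1 ?_
        have hshift : Summable (fun i : ℕ =>
            (((i+k).descFactorial k : ℕ) : ℝ) * ‖f (i+k)‖ * r ^ i) := by
          refine ((summable_nat_add_iff k).2 hfk).congr (fun i => ?_)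
          congr 2
          omega
        refine Summable.of_nonneg_of_le (fun i => ?_) (fun i => ?_)
          (hshift.mul_left (r ^ (k - d)))
        · exact mul_nonneg (mul_nonneg (by positivity) (norm_nonneg _)) (by positivity)
        · have hdm : (i+k).descFactorial d ≤ (i+k).descFactorial k :=
            desc_mono hdk (by omega)
          have hexp : r ^ (i + k - d) = r ^ (k - d) * r ^ i := by
            rw [← pow_add]
            congr 1
            omega
          calc (((i+k).descFactorial d : ℕ) : ℝ) * c 0 (i+k) * r ^ (i + k - d)
              = (((i+k).descFactorial d : ℕ) : ℝ) * ‖f (i+k)‖ * (r ^ (k-d) * r ^ i) := by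
                rw [hexp]; rfl
            _ ≤ (((i+k).descFactorial k : ℕ) : ℝ) * ‖f (i+k)‖ * (r ^ (k-d) * r ^ i) := by
                have : (((i+k).descFactorial d : ℕ) : ℝ) ≤ (((i+k).descFactorial k : ℕ) : ℝ) := by
                  exact_mod_cast hdm
                refine mul_le_mul_of_nonneg_right (mul_le_mul_of_nonneg_right this
                  (norm_nonneg _)) (by positivity)
            _ = r ^ (k - d) * ((((i+k).descFactorial k : ℕ) : ℝ) * ‖f (i+k)‖ * r ^ i) := by
                ring
    | succ a ih =>
      intro ha1
      have hak : a < k := by omega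
      obtain ⟨ih1, ih2⟩ := ih (by omega)
      have hca1 : c (a+1) = applyDCoeff (x a) (c a) := rfl
      constructor
      · intro m
        have h1 : ‖fs (a+1) m‖ ≤ ∑ p ∈ Finset.range (m+2),
            (p : ℝ) * ‖V a (m+1-p)‖ * ‖fs a p‖ :=
          norm_step_le (fs a) (V a) m (fs (a+1) m)
            (hsym (a+1) (by omega) m) (hstep a hak m)
        refine le_trans h1 ?_
        rw [hca1]
        refine Finset.sum_le_sum fun p _ => ?_
        exact mul_le_mul_of_nonneg_left (ih1 p)
          (mul_nonneg (by positivity) (norm_nonneg _))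
      · intro d hd
        have hxsum : Summable fun q : ℕ => ((q:ℝ)+1)^d * x a q * r^q := by
          have h05 : r < (r + r₀)/2 := by linarith
          have h051 : (r + r₀)/2 < r₀ := by linarith
          have h050 : 0 ≤ (r + r₀)/2 := by linarith
          exact geom_poly_summable d (fun q => norm_nonneg _) hr h05
            (hVsum a hak _ h050 h051)
        have hAsum := ih2 (d+1) (by omega)
        have hres := sumStep (fun q => norm_nonneg (V a q)) (hc0 a) hr d hxsum hAsum
        rw [hca1]
        exact hres
  obtain ⟨h1, h2⟩ := key k le_rfl
  have hcsum : Summable (fun m : ℕ => c k m * r ^ m) := by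
    have h3 := h2 0 (by omega)
    refine h3.congr (fun m => ?_)
    simp [Nat.descFactorial]
  have hle : ∀ m : ℕ, ‖fs k m‖ * r ^ m ≤ c k m * r ^ m := fun m =>
    mul_le_mul_of_nonneg_right (h1 m) (by positivity)
  have hfsum : Summable (fun m : ℕ => ‖fs k m‖ * r ^ m) :=
    Summable.of_nonneg_of_le (fun m => by positivity) hle hcsum
  exact ⟨hfsum, hcsum, Summable.tsum_le_tsum hle hfsum hcsum⟩
end
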